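/- (Proposition 4.2, convergence rate of the Douglas–Rachford scheme). Let H be a finite-dimensional real inner product space, K = H × H, D, E : H → Set H maximally monotone with a primal-dual solution pair (x⋆, y⋆) (−y⋆ ∈ D x⋆ and y⋆ ∈ E x⋆), γ > 0, θ = 2, and let (x_n), (x̄_n), (r_n), (s_n) satisfy s_n − x̄_n ∈ γ D x̄_n; 2x̄_n − s_n − r_n ∈ γ E r_n; s_{n+1} = s_n + ρ_n(r_n − x̄_n); x_{n+1} = x_n + ρ_n(x̄_n − x_n), with 0 < a ≤ ρ_n ≤ b < 2 for all n. Define P : K → K by P(x, y) = (γ⁻¹x − y, −x + γy), let Q be the orthogonal projection of K onto the range of P, R = P + Id − Q, z_n = (x_n, γ⁻¹(x_n − s_n)), and z⋆ = (x⋆, y⋆). Then there exists τ > 0 such that for all n, ‖s_{n+1} − s_n‖² ≤ (γ/(τ(n+1)))·‖Q z₀ − Q z⋆‖_R², and (n+1)·‖s_{n+1} − s_n‖² → 0 as n → ∞. -/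

import Mathlib

open scoped InnerProductSpace
open Filter Topology

/-- A set-valued operator is monotone. -/
def IsMonotoneSet {H : Type*} [NormedAddCommGroup H] [InnerProductSpace ℝ H]
    (A : H → Set H) : Prop :=
  ∀ x y u v, u ∈ A x → v ∈ A y → (0:ℝ) ≤ ⟪x - y, u - v⟫_ℝ

/-- A set-valued operator is maximally monotone. -/
def IsMaxMonotone {H : Type*} [NormedAddCommGroup H] [InnerProductSpace ℝ H]
    (A : H → Set H) : Prop :=
  IsMonotoneSet A ∧ ∀ B : H → Set H, IsMonotoneSet B → (∀ x, A x ⊆ B x) → ∀ x, B x = A x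

/-- The inner product on `K = H × H`: `⟨(x,y),(x',y')⟩ = ⟨x,x'⟩ + ⟨y,y'⟩`. -/
noncomputable def kinner {H : Type*} [NormedAddCommGroup H] [InnerProductSpace ℝ H]
    (w w' : H × H) : ℝ :=
  ⟪w.1, w'.1⟫_ℝ + ⟪w.2, w'.2⟫_ℝ

section aux
variable {H : Type*} [NormedAddCommGroup H] [InnerProductSpace ℝ H]

lemma dr_key {D E : H → Set H} (hD : IsMonotoneSet D) (hE : IsMonotoneSet E)
    {γ : ℝ} (hγ : 0 < γ)
    {p1 p2 q1 q2 s1 s2 u1 u2 v1 v2 : H}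
    (hu1 : u1 ∈ D p1) (hu2 : u2 ∈ D p2) (hv1 : v1 ∈ E q1) (hv2 : v2 ∈ E q2)
    (e1 : s1 - p1 = γ • u1) (e2 : s2 - p2 = γ • u2)
    (f1 : (2:ℝ) • p1 - s1 - q1 = γ • v1) (f2 : (2:ℝ) • p2 - s2 - q2 = γ • v2) :
    ‖(p1 - p2) - (q1 - q2)‖ ^ 2 ≤ ⟪(p1 - p2) - (q1 - q2), s1 - s2⟫_ℝ := by
  have h1 : (0:ℝ) ≤ ⟪p1 - p2, (s1 - p1) - (s2 - p2)⟫_ℝ := by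
    have := hD _ _ _ _ hu1 hu2
    rw [e1, e2, ← smul_sub, real_inner_smul_right]
    positivity
  have h2 : (0:ℝ) ≤ ⟪q1 - q2, ((2:ℝ) • p1 - s1 - q1) - ((2:ℝ) • p2 - s2 - q2)⟫_ℝ := by
    have := hE _ _ _ _ hv1 hv2
    rw [f1, f2, ← smul_sub, real_inner_smul_right]
    positivity
  set A := p1 - p2
  set B := q1 - q2
  set p := s1 - s2
  have eA : (s1 - p1) - (s2 - p2) = p - A := by simp [A, p]; abel
  have eB : ((2:ℝ) • p1 - s1 - q1) - ((2:ℝ) • p2 - s2 - q2) = (2:ℝ) • A - p - B := by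
    simp [A, B, p, smul_sub]; abel
  rw [eA] at h1; rw [eB] at h2
  have expand : ⟪A - B, p⟫_ℝ - ‖A - B‖ ^ 2 = ⟪A, p - A⟫_ℝ + ⟪B, (2:ℝ) • A - p - B⟫_ℝ := by
    simp only [inner_sub_left, inner_sub_right, real_inner_smul_right,
      ← real_inner_self_eq_norm_sq]
    rw [real_inner_comm A B]
    ring
  linarith

end aux

lemma Qformula {H : Type*} [NormedAddCommGroup H] [InnerProductSpace ℝ H]
    {γ : ℝ} (hγ : 0 < γ) {Pf : H × H → H × H}
    (hPf : ∀ w : H × H, Pf w = (γ⁻¹ • w.1 - w.2, -w.1 + γ • w.2))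
    {Q : H × H → H × H}
    (hQmem : ∀ w, Q w ∈ Set.range Pf)
    (hQorth : ∀ w u, kinner (w - Q w) (Pf u) = 0)
    (u v : H) :
    Q (u, v) = ((1 + γ^2)⁻¹ • (u - γ • v), -γ • ((1 + γ^2)⁻¹ • (u - γ • v))) := by
  have hpos : (0:ℝ) < 1 + γ^2 := by positivity
  obtain ⟨w, hw⟩ := hQmem (u, v)
  rw [hPf] at hw
  have hinv : γ • γ⁻¹ • w.1 = w.1 := by
    rw [smul_smul, mul_inv_cancel₀ hγ.ne', one_smul]
  have hsnd : (Q (u, v)).2 = -γ • (Q (u, v)).1 := by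
    rw [← hw]
    show -w.1 + γ • w.2 = -γ • (γ⁻¹ • w.1 - w.2)
    rw [neg_smul, smul_sub, hinv]
    abel
  set c0 : H := (Q (u, v)).1 with hc0
  have horth : ∀ d : H, ⟪u - c0 - γ • v - (γ * γ) • c0, d⟫_ℝ = 0 := by
    intro d
    have h := hQorth (u, v) (γ • d, 0)
    rw [hPf] at h
    simp only [kinner, smul_smul, inv_mul_cancel₀ hγ.ne', one_smul, smul_zero,
      add_zero, sub_zero] at h
    have h2 : ⟪u - c0, d⟫_ℝ + ⟪v - (Q (u,v)).2, -(γ • d)⟫_ℝ = 0 := by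
      simpa [kinner] using h
    rw [hsnd] at h2
    rw [inner_neg_right, real_inner_smul_right] at h2
    rw [show v - -γ • c0 = v + γ • c0 from by module] at h2
    simp only [inner_sub_left, inner_add_left, real_inner_smul_left] at h2 ⊢
    nlinarith [h2]
  have hzero : u - c0 - γ • v - (γ * γ) • c0 = 0 :=
    inner_self_eq_zero.mp (horth _)
  have h0 : u - γ • v - (1 + γ^2) • c0 = 0 := by rw [← hzero]; module
  have h1 : (1 + γ^2) • c0 = u - γ • v := (sub_eq_zero.mp h0).symm
  have hc0eq : c0 = (1 + γ^2)⁻¹ • (u - γ • v) := by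
    rw [← h1, smul_smul, inv_mul_cancel₀ hpos.ne', one_smul]
  have hQ : Q (u, v) = (c0, -γ • c0) := by
    ext
    · rfl
    · exact hsnd
  rw [hQ, hc0eq]


set_option maxHeartbeats 2000000 in
/-- Proposition 4.2: convergence rate of the Douglas–Rachford scheme (case θ = 2).
`Q` is the orthogonal projection of `K = H × H` onto the range of
`P(x,y) = (γ⁻¹x − y, −x + γy)`, `R = P + Id − Q`, `zₙ = (xₙ, γ⁻¹(xₙ − sₙ))`,
`z⋆ = (x⋆, y⋆)`, and `w₀ = Q z₀ − Q z⋆`, so that `‖Q z₀ − Q z⋆‖_R² = kinner w₀ (R w₀)`. -/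
theorem douglas_rachford_rate
    {H : Type*} [NormedAddCommGroup H] [InnerProductSpace ℝ H] [FiniteDimensional ℝ H]
    (D E : H → Set H) (hD : IsMaxMonotone D) (hE : IsMaxMonotone E)
    (xstar ystar : H) (hsol₁ : -ystar ∈ D xstar) (hsol₂ : ystar ∈ E xstar)
    (γ : ℝ) (hγ : 0 < γ)
    (x xbar r s : ℕ → H) (ρ : ℕ → ℝ)
    (a b : ℝ) (ha : 0 < a) (hb : b < 2) (hρ : ∀ n, a ≤ ρ n ∧ ρ n ≤ b)
    (hxbar : ∀ n, ∃ u ∈ D (xbar n), s n - xbar n = γ • u)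
    (hr : ∀ n, ∃ v ∈ E (r n), (2:ℝ) • xbar n - s n - r n = γ • v)
    (hs : ∀ n, s (n+1) = s n + ρ n • (r n - xbar n))
    (hx : ∀ n, x (n+1) = x n + ρ n • (xbar n - x n))
    (Pf : H × H → H × H)
    (hPf : ∀ w : H × H, Pf w = (γ⁻¹ • w.1 - w.2, -w.1 + γ • w.2))
    (Q : H × H → H × H)
    (hQmem : ∀ w, Q w ∈ Set.range Pf)
    (hQorth : ∀ w u, kinner (w - Q w) (Pf u) = 0)
    (w₀ : H × H)
    (hw₀ : w₀ = Q (x 0, γ⁻¹ • (x 0 - s 0)) - Q (xstar, ystar)) :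
    ∃ τ > (0:ℝ),
      (∀ n : ℕ, ‖s (n+1) - s n‖ ^ 2 ≤
        γ / (τ * ((n : ℝ) + 1)) * kinner w₀ (Pf w₀ + w₀ - Q w₀)) ∧
      Filter.Tendsto (fun n : ℕ => ((n : ℝ) + 1) * ‖s (n+1) - s n‖ ^ 2)
        Filter.atTop (nhds 0) := by
  obtain ⟨hDm, -⟩ := hD
  obtain ⟨hEm, -⟩ := hE
  obtain ⟨han, hbn⟩ : (0:ℝ) < a ∧ b < 2 := ⟨ha, hb⟩
  have hab : a ≤ b := le_trans (hρ 0).1 (hρ 0).2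
  set sstar : H := xstar - γ • ystar with hsstar
  set g : ℕ → H := fun n => r n - xbar n with hg
  choose u hu hequ using hxbar
  choose v hv heqv using hr
  have estar : sstar - xstar = γ • (-ystar) := by rw [hsstar]; module
  have fstar : (2:ℝ) • xstar - sstar - xstar = γ • ystar := by rw [hsstar]; module
  -- Fejér-type inner product bound against the solution
  have key_star : ∀ n, ‖g n‖ ^ 2 ≤ -⟪g n, s n - sstar⟫_ℝ := by
    intro n
    have h := dr_key hDm hEm hγ (hu n) hsol₁ (hv n) hsol₂ (hequ n) estar (heqv n) fstar
    have hrewr : (xbar n - xstar) - (r n - xstar) = -(g n) := by simp only [hg]; abel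
    rw [hrewr, norm_neg, inner_neg_left] at h
    linarith
  -- residual monotonicity inner product bound
  have key_step : ∀ n, ‖g (n+1) - g n‖ ^ 2 ≤ ρ n * ⟪g n - g (n+1), g n⟫_ℝ := by
    intro n
    have h := dr_key hDm hEm hγ (hu (n+1)) (hu n) (hv (n+1)) (hv n)
      (hequ (n+1)) (hequ n) (heqv (n+1)) (heqv n)
    have hrewr : (xbar (n+1) - xbar n) - (r (n+1) - r n) = g n - g (n+1) := by
      simp only [hg]; abel
    have hsd : s (n+1) - s n = ρ n • g n := by rw [hs n]; abel
    rw [hrewr, hsd, real_inner_smul_right] at h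
    calc ‖g (n+1) - g n‖ ^ 2 = ‖g n - g (n+1)‖ ^ 2 := by rw [norm_sub_rev]
    _ ≤ ρ n * ⟪g n - g (n+1), g n⟫_ℝ := h
  -- residual norms are nonincreasing
  have gmono : ∀ n, ‖g (n+1)‖ ^ 2 ≤ ‖g n‖ ^ 2 := by
    intro n
    obtain ⟨hρ1, hρ2⟩ := hρ n
    have hk : ‖g (n+1) - g n‖ ^ 2 ≤ -(ρ n * ⟪g n, g (n+1) - g n⟫_ℝ) := by
      have h := key_step n
      have heq : ⟪g n - g (n+1), g n⟫_ℝ = -⟪g n, g (n+1) - g n⟫_ℝ := by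
        rw [real_inner_comm]
        rw [show g n - g (n+1) = -(g (n+1) - g n) from by abel, inner_neg_right]
      rw [heq] at h
      linarith [h]
    have hexp : ‖g (n+1)‖ ^ 2
        = ‖g n‖ ^ 2 + 2 * ⟪g n, g (n+1) - g n⟫_ℝ + ‖g (n+1) - g n‖ ^ 2 := by
      have h1 := norm_add_sq_real (g n) (g (n+1) - g n)
      rw [show g n + (g (n+1) - g n) = g (n+1) from by abel] at h1
      linarith [h1]
    have hρpos : 0 < ρ n := lt_of_lt_of_le han hρ1
    set t : ℝ := ⟪g n, g (n+1) - g n⟫_ℝ with ht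
    have htle : t ≤ 0 := by nlinarith [sq_nonneg ‖g (n+1) - g n‖]
    have h2t : 2 * t ≤ ρ n * t := by nlinarith
    linarith [hk, hexp, h2t]
  -- one-step Fejér inequality
  have hc : (0:ℝ) < a * (2 - b) := by nlinarith
  have fej : ∀ n, a * (2 - b) * ‖g n‖ ^ 2 ≤
      ‖s n - sstar‖ ^ 2 - ‖s (n+1) - sstar‖ ^ 2 := by
    intro n
    obtain ⟨hρ1, hρ2⟩ := hρ n
    have hρpos : 0 < ρ n := lt_of_lt_of_le han hρ1
    have hexp : ‖s (n+1) - sstar‖ ^ 2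
        = ‖s n - sstar‖ ^ 2 + 2 * (ρ n * ⟪s n - sstar, g n⟫_ℝ) + ρ n ^ 2 * ‖g n‖ ^ 2 := by
      have h1 : s (n+1) - sstar = (s n - sstar) + ρ n • g n := by rw [hs n]; abel
      rw [h1, norm_add_sq_real, real_inner_smul_right, norm_smul,
        Real.norm_eq_abs, mul_pow, sq_abs]
    have hinner : ⟪s n - sstar, g n⟫_ℝ ≤ -‖g n‖ ^ 2 := by
      have := key_star n
      rw [real_inner_comm]
      linarith
    have hfact : a * (2 - b) ≤ ρ n * (2 - ρ n) := by nlinarith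
    nlinarith [sq_nonneg ‖g n‖, mul_le_mul_of_nonneg_right hfact (sq_nonneg ‖g n‖),
      mul_le_mul_of_nonneg_left hinner (le_of_lt hρpos)]
  -- telescoped rate inequality
  have claim : ∀ m n : ℕ, m ≤ n → ((n:ℝ) + 1 - (m:ℝ)) * (a * (2 - b) * ‖g n‖ ^ 2) ≤
      ‖s m - sstar‖ ^ 2 - ‖s (n+1) - sstar‖ ^ 2 := by
    intro m n hmn
    induction n, hmn using Nat.le_induction with
    | base => simpa using fej m
    | succ n hmn ih =>
      have hstep := fej (n+1)
      have hgm := gmono n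
      have hnm : (0:ℝ) ≤ (n:ℝ) + 1 - (m:ℝ) := by
        have : (m:ℝ) ≤ (n:ℝ) := Nat.cast_le.mpr hmn
        linarith
      have h1 : ((n:ℝ) + 1 - (m:ℝ)) * (a * (2 - b) * ‖g (n+1)‖ ^ 2)
          ≤ ((n:ℝ) + 1 - (m:ℝ)) * (a * (2 - b) * ‖g n‖ ^ 2) := by
        apply mul_le_mul_of_nonneg_left _ hnm
        exact mul_le_mul_of_nonneg_left hgm (le_of_lt hc)
      push_cast
      push_cast at ih
      linarith [h1, ih, hstep]
  have bound0 : ∀ n : ℕ, ((n:ℝ) + 1) * (a * (2 - b) * ‖g n‖ ^ 2) ≤ ‖s 0 - sstar‖ ^ 2 := by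
    intro n
    have := claim 0 n (Nat.zero_le n)
    simp only [Nat.cast_zero, sub_zero] at this
    nlinarith [sq_nonneg ‖s (n+1) - sstar‖]
  -- the constant: kinner w₀ (Pf w₀ + w₀ - Q w₀) = γ⁻¹ * ‖s 0 - sstar‖²
  have hpos1 : (0:ℝ) < 1 + γ ^ 2 := by positivity
  have hQf := Qformula hγ hPf hQmem hQorth
  have hQfix : ∀ c : H, Q (c, -γ • c) = (c, -γ • c) := by
    intro c
    rw [hQf]
    have h1 : c - γ • (-γ • c) = (1 + γ ^ 2) • c := by module
    rw [h1, smul_smul, inv_mul_cancel₀ hpos1.ne', one_smul]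
  set c₀ : H := (1 + γ ^ 2)⁻¹ • (s 0 - sstar) with hc₀
  have hw₀eq : w₀ = (c₀, -γ • c₀) := by
    rw [hw₀, hQf, hQf]
    have h1 : x 0 - γ • (γ⁻¹ • (x 0 - s 0)) = s 0 := by
      rw [smul_smul, mul_inv_cancel₀ hγ.ne', one_smul]; abel
    have h2 : xstar - γ • ystar = sstar := hsstar.symm
    rw [h1, h2]
    rw [Prod.mk_sub_mk, hc₀, ← smul_sub, ← smul_sub, ← smul_sub]
  have hkin : kinner w₀ (Pf w₀ + w₀ - Q w₀) = γ⁻¹ * ‖s 0 - sstar‖ ^ 2 := by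
    have hcan : Pf w₀ + w₀ - Q w₀ = Pf w₀ := by
      rw [hw₀eq, hQfix]; abel
    have hPfw : Pf w₀ = ((γ⁻¹ + γ) • c₀, -((1 + γ ^ 2) • c₀)) := by
      rw [hw₀eq, hPf]
      refine Prod.ext ?_ ?_
      · show γ⁻¹ • c₀ - (-γ • c₀) = (γ⁻¹ + γ) • c₀
        module
      · show -c₀ + γ • (-γ • c₀) = -((1 + γ ^ 2) • c₀)
        module
    rw [hcan, hPfw, hw₀eq]
    have hcn : ‖c₀‖ ^ 2 = ((1 + γ ^ 2)⁻¹) ^ 2 * ‖s 0 - sstar‖ ^ 2 := by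
      rw [hc₀, norm_smul, Real.norm_eq_abs, mul_pow, sq_abs]
    simp only [kinner, real_inner_smul_right, inner_neg_right, inner_neg_left,
      real_inner_smul_left, real_inner_self_eq_norm_sq, neg_neg]
    rw [hcn]
    field_simp
  -- pick τ
  refine ⟨a * (2 - b) / 4, by positivity, ?_, ?_⟩
  · intro n
    rw [hkin]
    obtain ⟨hρ1, hρ2⟩ := hρ n
    have hρpos : 0 < ρ n := lt_of_lt_of_le han hρ1
    have hsd : s (n+1) - s n = ρ n • g n := by rw [hs n]; abel
    have hnorm : ‖s (n+1) - s n‖ ^ 2 = ρ n ^ 2 * ‖g n‖ ^ 2 := by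
      rw [hsd, norm_smul, Real.norm_eq_abs, mul_pow, sq_abs]
    have hρ4 : ρ n ^ 2 ≤ 4 := by nlinarith
    have hmain : ((n:ℝ) + 1) * (a * (2 - b) / 4) * ‖s (n+1) - s n‖ ^ 2
        ≤ ‖s 0 - sstar‖ ^ 2 := by
      rw [hnorm]
      have h1 : ((n:ℝ) + 1) * (a * (2 - b) / 4) * (ρ n ^ 2 * ‖g n‖ ^ 2)
          ≤ ((n:ℝ) + 1) * (a * (2 - b) * ‖g n‖ ^ 2) := by
        have hn1 : (0:ℝ) ≤ (n:ℝ) + 1 := by positivity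
        have : (a * (2 - b) / 4) * (ρ n ^ 2 * ‖g n‖ ^ 2) ≤ a * (2 - b) * ‖g n‖ ^ 2 := by
          nlinarith [sq_nonneg ‖g n‖, mul_nonneg (le_of_lt hc) (sq_nonneg ‖g n‖)]
        calc ((n:ℝ) + 1) * (a * (2 - b) / 4) * (ρ n ^ 2 * ‖g n‖ ^ 2)
            = ((n:ℝ) + 1) * ((a * (2 - b) / 4) * (ρ n ^ 2 * ‖g n‖ ^ 2)) := by ring
          _ ≤ ((n:ℝ) + 1) * (a * (2 - b) * ‖g n‖ ^ 2) :=
            mul_le_mul_of_nonneg_left this hn1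
      linarith [h1, bound0 n]
    have hτn : (0:ℝ) < a * (2 - b) / 4 * ((n:ℝ) + 1) := by positivity
    have hR : γ / (a * (2 - b) / 4 * ((n:ℝ) + 1)) * (γ⁻¹ * ‖s 0 - sstar‖ ^ 2)
        = ‖s 0 - sstar‖ ^ 2 / (a * (2 - b) / 4 * ((n:ℝ) + 1)) := by
      field_simp
    rw [hR, le_div_iff₀ hτn]
    nlinarith [hmain]
  · -- convergence: (n+1) * ‖s(n+1) - s n‖² → 0
    set c : ℝ := a * (2 - b) with hcdef
    set h : ℕ → ℝ := fun n => ‖s n - sstar‖ ^ 2 with hh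
    have hh0 : ∀ n, 0 ≤ h n := fun n => sq_nonneg _
    have hanti : Antitone h := by
      apply antitone_nat_of_succ_le
      intro n
      have := fej n
      have := mul_nonneg (le_of_lt hc) (sq_nonneg ‖g n‖)
      simp only [hh]
      linarith
    have hbdd : BddBelow (Set.range h) := ⟨0, fun y ⟨n, hn⟩ => hn ▸ hh0 n⟩
    have hL : Tendsto h atTop (𝓝 (⨅ n, h n)) := tendsto_atTop_ciInf hanti hbdd
    set L : ℝ := ⨅ n, h n with hLdef
    have hLle : ∀ n, L ≤ h n := fun n => ciInf_le hbdd n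
    -- ‖g n‖² → 0
    have hgz : Tendsto (fun n : ℕ => ‖g n‖ ^ 2) atTop (𝓝 0) := by
      apply squeeze_zero (fun n => sq_nonneg _)
        (g := fun n : ℕ => (‖s 0 - sstar‖ ^ 2 / c) * (1 / ((n:ℝ) + 1)))
      · intro n
        have hb0 := bound0 n
        have hn1 : (0:ℝ) < (n:ℝ) + 1 := by positivity
        have hcn1 : (0:ℝ) < c * ((n:ℝ) + 1) := by positivity
        rw [show ‖s 0 - sstar‖ ^ 2 / c * (1 / ((n:ℝ) + 1))
            = ‖s 0 - sstar‖ ^ 2 / (c * ((n:ℝ) + 1)) from by rw [mul_one_div, div_div]]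
        rw [le_div_iff₀ hcn1]
        nlinarith [hb0]
      · have := tendsto_one_div_add_atTop_nhds_zero_nat (𝕜 := ℝ)
        have h2 := this.const_mul (‖s 0 - sstar‖ ^ 2 / c)
        simpa using h2
    have T : Tendsto (fun n : ℕ => ((n:ℝ) + 1) * ‖g n‖ ^ 2) atTop (𝓝 0) := by
      rw [Metric.tendsto_atTop]
      intro ε hε
      -- pick m with h m < L + c * ε / 2
      have hev : ∀ᶠ n in atTop, h n < L + c * ε / 2 := by
        have : L < L + c * ε / 2 := by nlinarith
        exact hL.eventually (Filter.Tendsto.eventually_lt_const this tendsto_id) |>.mono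
          (fun n hn => hn)
      obtain ⟨m, hm⟩ := hev.exists
      -- pick N₁ with m * ‖g n‖² < ε / 2 for n ≥ N₁
      have hmz : Tendsto (fun n : ℕ => (m:ℝ) * ‖g n‖ ^ 2) atTop (𝓝 0) := by
        simpa using hgz.const_mul (m:ℝ)
      have hev2 : ∀ᶠ n in atTop, (m:ℝ) * ‖g n‖ ^ 2 < ε / 2 := by
        have h2 : (0:ℝ) < ε / 2 := by linarith
        have := hmz.eventually (Filter.Tendsto.eventually_lt_const h2 tendsto_id)
        exact this.mono (fun n hn => hn)
      obtain ⟨N₁, hN₁⟩ := eventually_atTop.mp hev2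
      refine ⟨max m N₁, fun n hn => ?_⟩
      have hnm : m ≤ n := le_trans (le_max_left _ _) hn
      have hnN : N₁ ≤ n := le_trans (le_max_right _ _) hn
      have hcl := claim m n hnm
      have hLn : L ≤ h (n+1) := hLle (n+1)
      have hmgn := hN₁ n hnN
      have hgn0 : (0:ℝ) ≤ ((n:ℝ) + 1) * ‖g n‖ ^ 2 := by positivity
      rw [Real.dist_eq, sub_zero, abs_of_nonneg hgn0]
      -- (n+1-m) * c * ‖g n‖² ≤ h m - h (n+1) ≤ h m - L < c ε / 2
      have h1 : ((n:ℝ) + 1 - (m:ℝ)) * (c * ‖g n‖ ^ 2) < c * ε / 2 := by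
        calc ((n:ℝ) + 1 - (m:ℝ)) * (c * ‖g n‖ ^ 2) ≤ h m - h (n+1) := hcl
          _ ≤ h m - L := by linarith
          _ < c * ε / 2 := by linarith
      have h2 : ((n:ℝ) + 1) * (c * ‖g n‖ ^ 2) < c * ε / 2 + (m:ℝ) * (c * ‖g n‖ ^ 2) := by
        nlinarith [h1]
      have h3 : (m:ℝ) * (c * ‖g n‖ ^ 2) < c * (ε / 2) := by
        nlinarith [hmgn]
      have h4 : ((n:ℝ) + 1) * (c * ‖g n‖ ^ 2) < c * ε := by linarith
      nlinarith [h4]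
    -- squeeze the actual quantity
    have hb4 : ∀ n : ℕ, ((n:ℝ) + 1) * ‖s (n+1) - s n‖ ^ 2
        ≤ 4 * (((n:ℝ) + 1) * ‖g n‖ ^ 2) := by
      intro n
      obtain ⟨hρ1, hρ2⟩ := hρ n
      have hρpos : 0 < ρ n := lt_of_lt_of_le han hρ1
      have hsd : s (n+1) - s n = ρ n • g n := by rw [hs n]; abel
      have hnorm : ‖s (n+1) - s n‖ ^ 2 = ρ n ^ 2 * ‖g n‖ ^ 2 := by
        rw [hsd, norm_smul, Real.norm_eq_abs, mul_pow, sq_abs]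
      rw [hnorm]
      have hn1 : (0:ℝ) ≤ (n:ℝ) + 1 := by positivity
      have hρ4 : ρ n ^ 2 ≤ 4 := by nlinarith
      nlinarith [mul_le_mul_of_nonneg_right hρ4 (mul_nonneg hn1 (sq_nonneg ‖g n‖))]
    have T4 : Tendsto (fun n : ℕ => 4 * (((n:ℝ) + 1) * ‖g n‖ ^ 2)) atTop (𝓝 0) := by
      simpa using T.const_mul (4:ℝ)
    exact squeeze_zero (fun n => by positivity) hb4 T4
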